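/- Let Ξ̂ be the operator π(γ₂(Ξ)) = π(Ω_{o_p}) - π(Ω_{o_q}) - ((p-q)/(p+q))π(Ω_g). For f = h₁(x)h₂(y)ρ_y^μ Ψ_{κ₊}(ρ_xρ_y) with h₁ ∈ H^k(ℝ^p), h₂ ∈ H^l(ℝ^q), κ₊ = k + p/2, κ₋ = l + q/2, μ = (m + κ₊ - κ₋)/2 ∈ ℕ, and assuming the Casimir Ω_g acts on f by the scalar m(m+2) - (p+q)²/4 + (p+q), one has Ξ̂ f = λ f with λ = (κ₊ - κ₋)(κ₊ + κ₋ - 2) - ((p-q)/(p+q))·m(m+2). In particular λ = 0 when m = 0 (so that κ₊ = κ₋). -/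

import Mathlib

open MvPolynomial

noncomputable section

/-- Partial derivative in the i-th x-variable. -/
noncomputable def pdx {p q : ℕ} (i : Fin p) (F : (Fin p → ℝ) → (Fin q → ℝ) → ℝ) :
    (Fin p → ℝ) → (Fin q → ℝ) → ℝ :=
  fun x y => fderiv ℝ (fun x' => F x' y) x (Pi.single i 1)

/-- Partial derivative in the j-th y-variable. -/
noncomputable def pdy {p q : ℕ} (j : Fin q) (F : (Fin p → ℝ) → (Fin q → ℝ) → ℝ) :
    (Fin p → ℝ) → (Fin q → ℝ) → ℝ :=
  fun x y => fderiv ℝ (F x) y (Pi.single j 1)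

noncomputable def lapX {p q : ℕ} (F : (Fin p → ℝ) → (Fin q → ℝ) → ℝ) :
    (Fin p → ℝ) → (Fin q → ℝ) → ℝ :=
  fun x y => ∑ i : Fin p, pdx i (pdx i F) x y

noncomputable def lapY {p q : ℕ} (F : (Fin p → ℝ) → (Fin q → ℝ) → ℝ) :
    (Fin p → ℝ) → (Fin q → ℝ) → ℝ :=
  fun x y => ∑ j : Fin q, pdy j (pdy j F) x y

noncomputable def eulX {p q : ℕ} (F : (Fin p → ℝ) → (Fin q → ℝ) → ℝ) :
    (Fin p → ℝ) → (Fin q → ℝ) → ℝ :=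
  fun x y => ∑ i : Fin p, x i * pdx i F x y

noncomputable def eulY {p q : ℕ} (F : (Fin p → ℝ) → (Fin q → ℝ) → ℝ) :
    (Fin p → ℝ) → (Fin q → ℝ) → ℝ :=
  fun x y => ∑ j : Fin q, y j * pdy j F x y

/-- π(Ω_{o_p}) = E_x² + (p-2)E_x - r_x²Δ_x. -/
noncomputable def OmOp {p q : ℕ} (F : (Fin p → ℝ) → (Fin q → ℝ) → ℝ) :
    (Fin p → ℝ) → (Fin q → ℝ) → ℝ :=
  fun x y => eulX (eulX F) x y + ((p : ℝ) - 2) * eulX F x y -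
    (∑ i : Fin p, x i ^ 2) * lapX F x y

/-- π(Ω_{o_q}) = E_y² + (q-2)E_y - r_y²Δ_y. -/
noncomputable def OmOq {p q : ℕ} (F : (Fin p → ℝ) → (Fin q → ℝ) → ℝ) :
    (Fin p → ℝ) → (Fin q → ℝ) → ℝ :=
  fun x y => eulY (eulY F) x y + ((q : ℝ) - 2) * eulY F x y -
    (∑ j : Fin q, y j ^ 2) * lapY F x y

/-- E_x - E_y. -/
noncomputable def EmOp {p q : ℕ} (F : (Fin p → ℝ) → (Fin q → ℝ) → ℝ) :
    (Fin p → ℝ) → (Fin q → ℝ) → ℝ :=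
  fun x y => eulX F x y - eulY F x y

/-- π(Ω_g) = (E_x-E_y)² + (p-q)(E_x-E_y) - 2(E_x+E_y)
            - (r_x²r_y² + r_x²Δ_x + r_y²Δ_y + Δ_xΔ_y) - pq. -/
noncomputable def OmG {p q : ℕ} (F : (Fin p → ℝ) → (Fin q → ℝ) → ℝ) :
    (Fin p → ℝ) → (Fin q → ℝ) → ℝ :=
  fun x y => EmOp (EmOp F) x y + ((p : ℝ) - q) * EmOp F x y -
    2 * (eulX F x y + eulY F x y) -
    ((∑ i : Fin p, x i ^ 2) * (∑ j : Fin q, y j ^ 2) * F x y +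
      (∑ i : Fin p, x i ^ 2) * lapX F x y + (∑ j : Fin q, y j ^ 2) * lapY F x y +
      lapX (lapY F) x y) -
    (p : ℝ) * q * F x y

noncomputable def lapP {n : ℕ} (P : MvPolynomial (Fin n) ℝ) : MvPolynomial (Fin n) ℝ :=
  ∑ i : Fin n, pderiv i (pderiv i P)

/-- Ψ_α(u) = Σⱼ ((-1)ʲ/(j!(α)ⱼ))uʲ. -/
noncomputable def Psi (α : ℝ) (u : ℝ) : ℝ :=
  ∑' j : ℕ, ((-1) ^ j / ((j.factorial : ℝ) * (ascPochhammer ℝ j).eval α)) * u ^ j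

noncomputable def rhoX {p : ℕ} (x : Fin p → ℝ) : ℝ := (∑ i : Fin p, x i ^ 2) / 2

noncomputable def rhoY {q : ℕ} (y : Fin q → ℝ) : ℝ := (∑ j : Fin q, y j ^ 2) / 2

namespace XiAux

set_option maxHeartbeats 1000000

/-- The coefficients of `Psi`. -/
noncomputable def cc (α : ℝ) (j : ℕ) : ℝ :=
  (-1) ^ j / ((j.factorial : ℝ) * (ascPochhammer ℝ j).eval α)

/-- Term-by-term differentiation of an entire power series with coefficients
bounded by `M / j!`. -/
lemma hasDerivAt_series (a : ℕ → ℝ) (M : ℝ) (hM : ∀ j, |a j| ≤ M / j.factorial) (t : ℝ) :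
    HasDerivAt (fun u : ℝ => ∑' j : ℕ, a j * u ^ j)
      (∑' j : ℕ, (((j : ℝ) + 1) * a (j + 1)) * t ^ j) t := by
  have hM0 : 0 ≤ M := le_trans (abs_nonneg _) (by simpa using hM 0)
  have hR1 : (1 : ℝ) ≤ |t| + 1 := by have := abs_nonneg t; linarith
  have hR0 : (0 : ℝ) < |t| + 1 := lt_of_lt_of_le one_pos hR1
  have husum : Summable (fun j : ℕ => M * ((j : ℝ) * (|t| + 1) ^ j) / j.factorial) := by
    refine Summable.of_nonneg_of_le (fun j => by positivity) (fun j => ?_)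
      ((Real.summable_pow_div_factorial (2 * (|t| + 1))).mul_left M)
    have h1 : (j : ℝ) ≤ 2 ^ j := by
      calc (j : ℝ) ≤ ((2 ^ j : ℕ) : ℝ) := by exact_mod_cast (Nat.lt_two_pow_self (n := j)).le
      _ = 2 ^ j := by push_cast; ring
    have h2 : (j : ℝ) * (|t| + 1) ^ j ≤ (2 * (|t| + 1)) ^ j := by
      rw [mul_pow]; exact mul_le_mul_of_nonneg_right h1 (by positivity)
    rw [← mul_div_assoc]
    gcongr
  have hbd : ∀ (j : ℕ) (y : ℝ), y ∈ Metric.ball (0 : ℝ) (|t| + 1) →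
      ‖a j * ((j : ℝ) * y ^ (j - 1))‖ ≤ M * ((j : ℝ) * (|t| + 1) ^ j) / j.factorial := by
    intro j y hy
    have hyR : |y| ≤ |t| + 1 := by
      have := Metric.mem_ball.mp hy
      rw [Real.dist_eq, sub_zero] at this
      exact this.le
    have hypow : |y| ^ (j - 1) ≤ (|t| + 1) ^ j := by
      calc |y| ^ (j - 1) ≤ (|t| + 1) ^ (j - 1) := pow_le_pow_left₀ (abs_nonneg _) hyR _
        _ ≤ (|t| + 1) ^ j := pow_le_pow_right₀ hR1 (Nat.sub_le _ _)
    calc ‖a j * ((j : ℝ) * y ^ (j - 1))‖ = |a j| * ((j : ℝ) * |y| ^ (j - 1)) := by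
          rw [Real.norm_eq_abs, abs_mul, abs_mul, abs_pow, Nat.abs_cast]
      _ ≤ (M / j.factorial) * ((j : ℝ) * (|t| + 1) ^ j) := by
          apply mul_le_mul (hM j) ?_ (by positivity) (by positivity)
          exact mul_le_mul_of_nonneg_left hypow (by positivity)
      _ = M * ((j : ℝ) * (|t| + 1) ^ j) / j.factorial := by ring
  have hder : ∀ (j : ℕ) (y : ℝ), y ∈ Metric.ball (0 : ℝ) (|t| + 1) →
      HasDerivAt (fun u : ℝ => a j * u ^ j) (a j * ((j : ℝ) * y ^ (j - 1))) y :=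
    fun j y _ => (hasDerivAt_pow j y).const_mul (a j)
  have h0 : Summable (fun j : ℕ => a j * (0 : ℝ) ^ j) := by
    apply summable_of_ne_finset_zero (s := {0})
    intro j hj
    have : j ≠ 0 := by simpa using hj
    simp [zero_pow this]
  have htball : t ∈ Metric.ball (0 : ℝ) (|t| + 1) := by
    rw [Metric.mem_ball, Real.dist_eq, sub_zero]; linarith [le_abs_self t, neg_abs_le t,
      abs_nonneg t]
  have h0ball : (0 : ℝ) ∈ Metric.ball (0 : ℝ) (|t| + 1) := by
    rw [Metric.mem_ball, dist_self]; exact hR0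
  have key := hasDerivAt_tsum_of_isPreconnected husum Metric.isOpen_ball
    ((convex_ball (0:ℝ) (|t| + 1)).isPreconnected) hder hbd h0ball h0 htball
  have hsum : Summable (fun j : ℕ => a j * ((j : ℝ) * t ^ (j - 1))) :=
    Summable.of_norm_bounded husum (fun j => hbd j t htball)
  have hre : ∑' j : ℕ, a j * ((j : ℝ) * t ^ (j - 1))
      = ∑' j : ℕ, (((j : ℝ) + 1) * a (j + 1)) * t ^ j := by
    rw [Summable.tsum_eq_zero_add hsum]
    simp only [Nat.cast_zero, pow_zero, zero_mul, mul_zero, zero_add]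
    apply tsum_congr
    intro j
    have hj : (j + 1) - 1 = j := rfl
    rw [hj]
    push_cast
    ring
  rwa [hre] at key

lemma bound_succ (a : ℕ → ℝ) (M : ℝ) (h : ∀ j, |a j| ≤ M / j.factorial) :
    ∀ j : ℕ, |(((j : ℕ) : ℝ) + 1) * a (j + 1)| ≤ M / j.factorial := by
  intro j
  have hj1 : (0 : ℝ) < (j : ℝ) + 1 := by positivity
  rw [abs_mul, abs_of_pos hj1]
  have hle := h (j + 1)
  have heq : ((j : ℝ) + 1) * (M / (j + 1).factorial) = M / j.factorial := by
    rw [Nat.factorial_succ]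
    have h1 : ((j : ℝ) + 1) ≠ 0 := hj1.ne'
    have h2 : ((j.factorial : ℕ) : ℝ) ≠ 0 := by positivity
    push_cast
    field_simp
  calc ((j : ℝ) + 1) * |a (j + 1)| ≤ ((j : ℝ) + 1) * (M / (j + 1).factorial) :=
        mul_le_mul_of_nonneg_left hle hj1.le
    _ = M / j.factorial := heq

/-- lower bound on the Pochhammer symbol. -/
lemma asc_lb {α : ℝ} (hα : 0 < α) : ∀ j, min 1 α ≤ (ascPochhammer ℝ j).eval α := by
  intro j
  induction j with
  | zero =>
    rw [ascPochhammer_zero]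
    simpa using min_le_left 1 α
  | succ j ih =>
    rw [ascPochhammer_succ_right]
    simp only [Polynomial.eval_mul, Polynomial.eval_add, Polynomial.eval_X,
      Polynomial.eval_natCast]
    rcases Nat.eq_zero_or_pos j with hj | hj
    · subst hj
      rw [ascPochhammer_zero]
      simpa using min_le_right 1 α
    · have hj1 : (1 : ℝ) ≤ α + j := by
        have : (1 : ℝ) ≤ (j : ℝ) := by exact_mod_cast hj
        linarith
      have hmin : (0 : ℝ) < min 1 α := lt_min one_pos hα
      calc min 1 α = min 1 α * 1 := (mul_one _).symm
        _ ≤ (ascPochhammer ℝ j).eval α * (α + j) :=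
            mul_le_mul ih hj1 one_pos.le (le_trans hmin.le ih)

lemma cc_bound (α : ℝ) (hα : 0 ≤ α) :
    ∃ M : ℝ, ∀ j, |cc α j| ≤ M / j.factorial := by
  refine ⟨max 1 (min 1 α)⁻¹, fun j => ?_⟩
  have hM1 : (1 : ℝ) ≤ max 1 (min 1 α)⁻¹ := le_max_left _ _
  rcases Nat.eq_zero_or_pos j with hj | hj
  · subst hj
    have : cc α 0 = 1 := by simp [cc, ascPochhammer_zero]
    rw [this]
    simpa using hM1
  rcases eq_or_lt_of_le hα with hα0 | hαpos
  · have hz : (ascPochhammer ℝ j).eval α = 0 := by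
      obtain ⟨j', rfl⟩ := Nat.exists_eq_succ_of_ne_zero hj.ne'
      rw [ascPochhammer_succ_left]
      simp [← hα0]
    have : cc α j = 0 := by simp [cc, hz]
    rw [this, abs_zero]
    positivity
  · have hlb := asc_lb hαpos j
    have hmin : (0 : ℝ) < min 1 α := lt_min one_pos hαpos
    have hasc : (0 : ℝ) < (ascPochhammer ℝ j).eval α := lt_of_lt_of_le hmin hlb
    have hfac : (0 : ℝ) < (j.factorial : ℝ) := by positivity
    have habs : |cc α j| = 1 / ((j.factorial : ℝ) * (ascPochhammer ℝ j).eval α) := by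
      rw [cc, abs_div, abs_pow, abs_neg, abs_one, one_pow, abs_of_pos (by positivity)]
    rw [habs, div_le_div_iff₀ (by positivity) hfac]
    have h1 : (1 : ℝ) ≤ (min 1 α)⁻¹ * (ascPochhammer ℝ j).eval α := by
      have h2 := mul_le_mul_of_nonneg_left hlb (inv_nonneg.mpr hmin.le)
      rwa [inv_mul_cancel₀ hmin.ne'] at h2
    calc (1 : ℝ) * (j.factorial : ℝ) = (j.factorial : ℝ) * 1 := by ring
      _ ≤ (j.factorial : ℝ) * ((min 1 α)⁻¹ * (ascPochhammer ℝ j).eval α) :=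
          mul_le_mul_of_nonneg_left h1 hfac.le
      _ ≤ max 1 (min 1 α)⁻¹ * ((j.factorial : ℝ) * (ascPochhammer ℝ j).eval α) := by
          rw [← mul_assoc, mul_comm (j.factorial : ℝ) ((min 1 α)⁻¹), mul_assoc]
          exact mul_le_mul_of_nonneg_right (le_max_right _ _) (by positivity)

/-- First derivative function of `Psi`. -/
noncomputable def Psi1 (α : ℝ) (t : ℝ) : ℝ :=
  ∑' j : ℕ, (((j : ℝ) + 1) * cc α (j + 1)) * t ^ j

/-- Second derivative function of `Psi`. -/
noncomputable def Psi2 (α : ℝ) (t : ℝ) : ℝ :=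
  ∑' j : ℕ, (((j : ℝ) + 1) * ((((j : ℕ) : ℝ) + 1 + 1) * cc α (j + 1 + 1))) * t ^ j

lemma hasDerivAt_Psi {α : ℝ} (hα : 0 ≤ α) (t : ℝ) :
    HasDerivAt (Psi α) (Psi1 α t) t := by
  obtain ⟨M, hM⟩ := cc_bound α hα
  exact hasDerivAt_series (cc α) M hM t

lemma hasDerivAt_Psi1 {α : ℝ} (hα : 0 ≤ α) (t : ℝ) :
    HasDerivAt (Psi1 α) (Psi2 α t) t := by
  obtain ⟨M, hM⟩ := cc_bound α hα
  have key := hasDerivAt_series (fun j => (((j : ℕ) : ℝ) + 1) * cc α (j + 1)) M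
    (bound_succ (cc α) M hM) t
  have hre : ∑' j : ℕ, ((((j : ℕ) : ℝ) + 1) *
        ((fun j : ℕ => (((j : ℕ) : ℝ) + 1) * cc α (j + 1)) (j + 1))) * t ^ j
      = Psi2 α t := by
    apply tsum_congr
    intro j
    push_cast
    ring
  rw [← hre]
  exact key

end XiAux
namespace XiAux

/-- The continuous linear functional `v ↦ ∑ i, w i * v i`. -/
noncomputable def lin {n : ℕ} (w : Fin n → ℝ) : (Fin n → ℝ) →L[ℝ] ℝ :=
  ∑ i, w i • (ContinuousLinearMap.proj i : (Fin n → ℝ) →L[ℝ] ℝ)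

lemma lin_apply {n : ℕ} (w v : Fin n → ℝ) : lin w v = ∑ i, w i * v i := by
  simp [lin, ContinuousLinearMap.sum_apply]

lemma lin_single {n : ℕ} (w : Fin n → ℝ) (i : Fin n) : lin w (Pi.single i 1) = w i := by
  rw [lin_apply]
  rw [Finset.sum_eq_single i]
  · simp
  · intro j _ hji
    simp [Pi.single_apply, hji]
  · simp

/-- Differentiability of multivariate polynomial evaluation,
with the gradient given by the formal partial derivatives. -/
lemma hasFDerivAt_eval {n : ℕ} (P : MvPolynomial (Fin n) ℝ) (x : Fin n → ℝ) :
    HasFDerivAt (fun v : Fin n → ℝ => eval v P)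
      (lin fun i => eval x (pderiv i P)) x := by
  induction P using MvPolynomial.induction_on with
  | C a =>
    have h1 : (fun v : Fin n → ℝ => eval v (C a : MvPolynomial (Fin n) ℝ)) = fun _ => a := by
      funext v; simp
    have h2 : (lin fun i => eval x (pderiv i (C a : MvPolynomial (Fin n) ℝ)))
        = (0 : (Fin n → ℝ) →L[ℝ] ℝ) := by
      apply ContinuousLinearMap.ext
      intro v
      simp [lin_apply, pderiv_C]
    rw [h1, h2]
    exact hasFDerivAt_const a x
  | add P Q hP hQ =>
    have h1 : (fun v : Fin n → ℝ => eval v (P + Q)) =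
        fun v => eval v P + eval v Q := by funext v; simp
    have h2 : (lin fun i => eval x (pderiv i (P + Q)))
        = (lin fun i => eval x (pderiv i P)) + (lin fun i => eval x (pderiv i Q)) := by
      apply ContinuousLinearMap.ext
      intro v
      simp [lin_apply, Finset.sum_add_distrib, add_mul]
    rw [h1, h2]
    exact hP.add hQ
  | mul_X P i hP =>
    have h1 : (fun v : Fin n → ℝ => eval v (P * X i)) =
        fun v => eval v P * v i := by funext v; simp
    have hproj : HasFDerivAt (fun v : Fin n → ℝ => v i)
        (ContinuousLinearMap.proj i : (Fin n → ℝ) →L[ℝ] ℝ) x := by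
      have := (ContinuousLinearMap.proj (R := ℝ) (φ := fun _ : Fin n => ℝ) i).hasFDerivAt (x := x)
      exact this
    have h3 := hP.mul hproj
    have h2 : (lin fun j => eval x (pderiv j (P * X i)))
        = eval x P • (ContinuousLinearMap.proj i : (Fin n → ℝ) →L[ℝ] ℝ)
          + x i • lin fun j => eval x (pderiv j P) := by
      apply ContinuousLinearMap.ext
      intro v
      classical
      simp only [ContinuousLinearMap.add_apply, ContinuousLinearMap.coe_smul',
        Pi.smul_apply, ContinuousLinearMap.proj_apply, smul_eq_mul, lin_apply,
        pderiv_mul, pderiv_X, map_add, eval_mul, eval_X]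
      have hsingle : ∀ j : Fin n,
          (eval x) ((Pi.single j (1 : MvPolynomial (Fin n) ℝ) :
            Fin n → MvPolynomial (Fin n) ℝ) i) = if i = j then 1 else 0 := by
        intro j
        rcases eq_or_ne i j with h | h
        · subst h; simp
        · simp [Pi.single_apply, h]
      simp only [hsingle, mul_ite, mul_one, mul_zero, add_mul, ite_mul, zero_mul,
        Finset.sum_add_distrib, Finset.sum_ite_eq, Finset.mem_univ, if_true]
      rw [add_comm, Finset.mul_sum]
      congr 1
      apply Finset.sum_congr rfl
      intro j _
      ring
    rw [h1, h2]
    exact h3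

end XiAux
namespace XiAux

/-- The polynomial `ρ = (∑ Xᵢ²)/2`. -/
noncomputable def sqP (n : ℕ) : MvPolynomial (Fin n) ℝ :=
  C (1 / 2) * ∑ i, X i ^ 2

lemma eval_sqP {n : ℕ} (x : Fin n → ℝ) : eval x (sqP n) = rhoX x := by
  simp only [sqP, rhoX, eval_mul, eval_C, map_sum, eval_pow, eval_X]
  ring

lemma pderiv_sqP {n : ℕ} (i : Fin n) : pderiv i (sqP n) = X i := by
  classical
  rw [sqP, pderiv_C_mul, map_sum]
  have h : ∀ j : Fin n, pderiv i (X j ^ 2 : MvPolynomial (Fin n) ℝ)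
      = if j = i then 2 * X i else 0 := by
    intro j
    rcases eq_or_ne j i with h | h
    · subst h
      rw [pderiv_pow, pderiv_X_self]
      norm_num
    · rw [pderiv_pow, pderiv_X_of_ne h]
      simp [h]
  rw [Finset.sum_congr rfl fun j _ => h j, Finset.sum_ite_eq' Finset.univ i
    (fun _ => 2 * X i)]
  rw [if_pos (Finset.mem_univ i)]
  have h2 : ((2 : MvPolynomial (Fin n) ℝ)) = C 2 := (map_ofNat (C : ℝ →+* MvPolynomial (Fin n) ℝ) 2).symm
  rw [show (C (1/2 : ℝ) : MvPolynomial (Fin n) ℝ) * (2 * X i)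
    = (C (1/2 : ℝ) * C 2) * X i by rw [h2]; ring]
  rw [← C_mul]
  norm_num

lemma sqP_hom {n : ℕ} : (sqP n).IsHomogeneous 2 := by
  apply MvPolynomial.IsHomogeneous.C_mul
  apply MvPolynomial.IsHomogeneous.sum
  intro i _
  exact MvPolynomial.isHomogeneous_X_pow i 2

/-- Euler's identity for homogeneous polynomials. -/
lemma euler {n d : ℕ} {Q : MvPolynomial (Fin n) ℝ} (hQ : Q.IsHomogeneous d) :
    ∑ i, X i * pderiv i Q = d • Q := by
  classical
  have key : ∀ s ∈ Q.support,
      ∑ i : Fin n, X i * pderiv i (monomial s (coeff s Q)) = d • monomial s (coeff s Q) := by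
    intro s hs
    have h1 := hQ (MvPolynomial.mem_support_iff.mp hs)
    have hdeg : ∑ i : Fin n, s i = d := by
      have h2 : ∑ i ∈ s.support, s i = ∑ i : Fin n, s i :=
        Finset.sum_subset (Finset.subset_univ _)
          (fun i _ hi => by rwa [Finsupp.notMem_support_iff] at hi)
      rw [← h1, Finsupp.weight_apply, Finsupp.sum]
      simp only [smul_eq_mul, Pi.one_apply, mul_one]
      exact h2.symm
    have hterm : ∀ i : Fin n, X i * pderiv i (monomial s (coeff s Q))
        = (s i) • monomial s (coeff s Q) := by
      intro i
      rw [pderiv_monomial]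
      rcases Nat.eq_zero_or_pos (s i) with h | h
      · rw [h]
        simp
      · have hkey : Finsupp.single i 1 + (s - Finsupp.single i 1) = s := by
          ext j
          simp only [Finsupp.add_apply, Finsupp.tsub_apply, Finsupp.single_apply]
          rcases eq_or_ne i j with hj | hj
          · subst hj
            split_ifs
            · omega
            · omega
          · simp [hj]
        calc X i * monomial (s - Finsupp.single i 1) (coeff s Q * s i)
            = X i ^ 1 * monomial (s - Finsupp.single i 1) (coeff s Q * s i) := by
              rw [pow_one]
          _ = monomial (Finsupp.single i 1 + (s - Finsupp.single i 1))
              (coeff s Q * s i) := (monomial_single_add).symm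
          _ = monomial s (coeff s Q * s i) := by rw [hkey]
          _ = (s i) • monomial s (coeff s Q) := by
              rw [MvPolynomial.smul_monomial]
              congr 1
              rw [nsmul_eq_mul]
              ring
    rw [Finset.sum_congr rfl fun i _ => hterm i, ← Finset.sum_smul, hdeg]
  conv_lhs => rw [← Q.support_sum_monomial_coeff]
  conv_rhs => rw [← Q.support_sum_monomial_coeff]
  rw [Finset.smul_sum]
  calc ∑ i : Fin n, X i * pderiv i (∑ s ∈ Q.support, monomial s (coeff s Q))
      = ∑ i : Fin n, ∑ s ∈ Q.support, X i * pderiv i (monomial s (coeff s Q)) := by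
        apply Finset.sum_congr rfl
        intro i _
        rw [map_sum, Finset.mul_sum]
    _ = ∑ s ∈ Q.support, ∑ i : Fin n, X i * pderiv i (monomial s (coeff s Q)) :=
        Finset.sum_comm
    _ = ∑ s ∈ Q.support, d • monomial s (coeff s Q) := Finset.sum_congr rfl key

/-- Euler's identity, pointwise form. -/
lemma euler_eval {n d : ℕ} {Q : MvPolynomial (Fin n) ℝ} (hQ : Q.IsHomogeneous d)
    (x : Fin n → ℝ) :
    ∑ i, x i * eval x (pderiv i Q) = (d : ℝ) * eval x Q := by
  have h := congrArg (eval x) (euler hQ)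
  rw [map_sum] at h
  simp only [eval_mul, eval_X] at h
  rw [h]
  rw [nsmul_eq_mul, eval_mul]
  simp

lemma lapP_C_mul {n : ℕ} (a : ℝ) (P : MvPolynomial (Fin n) ℝ) :
    lapP (C a * P) = C a * lapP P := by
  simp only [lapP, pderiv_C_mul, Finset.mul_sum]

end XiAux
namespace XiAux

/-- One-variable partial derivative. -/
noncomputable def pd1 {n : ℕ} (i : Fin n) (f : (Fin n → ℝ) → ℝ) : (Fin n → ℝ) → ℝ :=
  fun x => fderiv ℝ f x (Pi.single i 1)

/-- One-variable Euler operator. -/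
noncomputable def eul1 {n : ℕ} (f : (Fin n → ℝ) → ℝ) : (Fin n → ℝ) → ℝ :=
  fun x => ∑ i, x i * pd1 i f x

/-- One-variable Laplacian. -/
noncomputable def lap1 {n : ℕ} (f : (Fin n → ℝ) → ℝ) : (Fin n → ℝ) → ℝ :=
  fun x => ∑ i, pd1 i (pd1 i f) x

/-- The basic shape of functions we differentiate. -/
noncomputable def shp {n : ℕ} (Q : MvPolynomial (Fin n) ℝ) (g : ℝ → ℝ) (b : ℝ) :
    (Fin n → ℝ) → ℝ :=
  fun v => eval v Q * g (rhoX v * b)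

lemma shp_hasFDerivAt {n : ℕ} (Q : MvPolynomial (Fin n) ℝ) {g g1 : ℝ → ℝ}
    (hg : ∀ t, HasDerivAt g (g1 t) t) (b : ℝ) (x : Fin n → ℝ) :
    HasFDerivAt (shp Q g b)
      (lin fun i => eval x (pderiv i Q) * g (rhoX x * b)
        + eval x Q * (g1 (rhoX x * b) * (b * x i))) x := by
  have hfun : (fun v : Fin n → ℝ => eval v (C b * sqP n)) = fun v => rhoX v * b := by
    funext v
    rw [eval_mul, eval_C, eval_sqP]
    ring
  have h0 : HasFDerivAt (fun v : Fin n → ℝ => rhoX v * b)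
      (lin fun i => eval x (pderiv i (C b * sqP n))) x :=
    hfun ▸ hasFDerivAt_eval (C b * sqP n) x
  have hc : HasFDerivAt (fun v : Fin n → ℝ => g (rhoX v * b))
      (g1 (rhoX x * b) • lin fun i => eval x (pderiv i (C b * sqP n))) x :=
    (hg (rhoX x * b)).comp_hasFDerivAt x h0
  have hQ := hasFDerivAt_eval Q x
  have hmul := hQ.mul hc
  refine hmul.congr_fderiv (Eq.symm ?_)
  apply ContinuousLinearMap.ext
  intro v
  simp only [ContinuousLinearMap.add_apply, ContinuousLinearMap.coe_smul', Pi.smul_apply,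
    smul_eq_mul, lin_apply, pderiv_C_mul, pderiv_sqP, eval_mul, eval_C, eval_X]
  simp only [Finset.mul_sum]
  rw [← Finset.sum_add_distrib]
  apply Finset.sum_congr rfl
  intro i _
  ring

lemma shp_pd {n : ℕ} (Q : MvPolynomial (Fin n) ℝ) {g g1 : ℝ → ℝ}
    (hg : ∀ t, HasDerivAt g (g1 t) t) (b : ℝ) (x : Fin n → ℝ) (i : Fin n) :
    pd1 i (shp Q g b) x = shp (pderiv i Q) g b x + b * shp (X i * Q) g1 b x := by
  rw [pd1, (shp_hasFDerivAt Q hg b x).fderiv, lin_single]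
  simp only [shp, eval_mul, eval_X]
  ring

lemma pd1_combo {n : ℕ} {F1 F2 : (Fin n → ℝ) → ℝ} {x : Fin n → ℝ}
    (h1 : DifferentiableAt ℝ F1 x) (h2 : DifferentiableAt ℝ F2 x)
    (c1 c2 : ℝ) (i : Fin n) :
    pd1 i (fun v => c1 * F1 v + c2 * F2 v) x = c1 * pd1 i F1 x + c2 * pd1 i F2 x := by
  simp only [pd1]
  rw [fderiv_fun_add ((h1.const_mul c1)) ((h2.const_mul c2)),
    fderiv_const_mul h1, fderiv_const_mul h2]
  simp

/-- Euler operator on a shape function. -/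
lemma eul1_shp {n d : ℕ} {Q : MvPolynomial (Fin n) ℝ} (hQ : Q.IsHomogeneous d)
    {g g1 : ℝ → ℝ} (hg : ∀ t, HasDerivAt g (g1 t) t) (b : ℝ) (x : Fin n → ℝ) :
    eul1 (shp Q g b) x = (d : ℝ) * shp Q g b x + (2 * b) * shp (sqP n * Q) g1 b x := by
  have hterm : ∀ i : Fin n, x i * pd1 i (shp Q g b) x
      = x i * eval x (pderiv i Q) * g (rhoX x * b)
        + (b * (eval x Q * g1 (rhoX x * b))) * (x i * x i) := by
    intro i
    rw [shp_pd Q hg b x i]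
    simp only [shp, eval_mul, eval_X]
    ring
  have hsq : ∑ i : Fin n, x i * x i = 2 * rhoX x := by
    rw [rhoX, Finset.sum_congr rfl fun i (_ : i ∈ Finset.univ) => (pow_two (x i)).symm]
    ring
  rw [eul1, Finset.sum_congr rfl fun i _ => hterm i, Finset.sum_add_distrib,
    ← Finset.sum_mul, ← Finset.mul_sum, euler_eval hQ x, hsq]
  simp only [shp, eval_mul, eval_sqP]
  ring

/-- The master computation: the operator `E² + (n-2)E - r²Δ` acts on
`eval v Q * g(ρ(v)b)`, for `Q` harmonic homogeneous of degree `d`,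
by the scalar `d(d+n-2)`. -/
lemma master {n d : ℕ} {Q : MvPolynomial (Fin n) ℝ} (hQ : Q.IsHomogeneous d)
    (hharm : lapP Q = 0) {g g1 g2 : ℝ → ℝ}
    (hg : ∀ t, HasDerivAt g (g1 t) t) (hg1 : ∀ t, HasDerivAt g1 (g2 t) t)
    (b : ℝ) (x : Fin n → ℝ) :
    eul1 (eul1 (shp Q g b)) x + ((n : ℝ) - 2) * eul1 (shp Q g b) x
      - (∑ i, x i ^ 2) * lap1 (shp Q g b) x
    = ((d : ℝ) * ((d : ℝ) + n - 2)) * shp Q g b x := by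
  have hsum2 : (∑ i : Fin n, x i ^ 2) = 2 * rhoX x := by
    rw [rhoX]; ring
  -- second Euler application
  have hfun : eul1 (shp Q g b) =
      fun v => (d : ℝ) * shp Q g b v + (2 * b) * shp (sqP n * Q) g1 b v :=
    funext fun v => eul1_shp hQ hg b v
  have hQ2 : (sqP n * Q).IsHomogeneous (2 + d) := sqP_hom.mul hQ
  have hQ3 : (sqP n * (sqP n * Q)).IsHomogeneous (2 + (2 + d)) := sqP_hom.mul hQ2
  have heul2 : eul1 (eul1 (shp Q g b)) x
      = (d : ℝ) * eul1 (shp Q g b) x + (2 * b) * eul1 (shp (sqP n * Q) g1 b) x := by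
    have hc : ∀ i : Fin n, x i * pd1 i
        (fun v => (d : ℝ) * shp Q g b v + (2 * b) * shp (sqP n * Q) g1 b v) x
        = (d : ℝ) * (x i * pd1 i (shp Q g b) x)
          + (2 * b) * (x i * pd1 i (shp (sqP n * Q) g1 b) x) := by
      intro i
      rw [pd1_combo (shp_hasFDerivAt Q hg b x).differentiableAt
        (shp_hasFDerivAt (sqP n * Q) hg1 b x).differentiableAt]
      ring
    calc eul1 (eul1 (shp Q g b)) x
        = ∑ i : Fin n, x i * pd1 i
            (fun v => (d : ℝ) * shp Q g b v + (2 * b) * shp (sqP n * Q) g1 b v) x := by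
          rw [hfun]; rfl
      _ = ∑ i : Fin n, ((d : ℝ) * (x i * pd1 i (shp Q g b) x)
            + (2 * b) * (x i * pd1 i (shp (sqP n * Q) g1 b) x)) :=
          Finset.sum_congr rfl fun i _ => hc i
      _ = (d : ℝ) * eul1 (shp Q g b) x + (2 * b) * eul1 (shp (sqP n * Q) g1 b) x := by
          rw [Finset.sum_add_distrib, ← Finset.mul_sum, ← Finset.mul_sum]
          rfl
  -- Laplacian
  have hlap : lap1 (shp Q g b) x
      = b * ((2 * d + n) * (eval x Q * g1 (rhoX x * b)))
        + 2 * rhoX x * b ^ 2 * (eval x Q * g2 (rhoX x * b)) := by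
    have hpdfun : ∀ i : Fin n, pd1 i (shp Q g b)
        = fun v => 1 * shp (pderiv i Q) g b v + b * shp (X i * Q) g1 b v := by
      intro i
      funext v
      rw [shp_pd Q hg b v i]
      ring
    have hpd2 : ∀ i : Fin n, pd1 i (pd1 i (shp Q g b)) x
        = (shp (pderiv i (pderiv i Q)) g b x + b * shp (X i * pderiv i Q) g1 b x)
          + b * (shp (pderiv i (X i * Q)) g1 b x + b * shp (X i * (X i * Q)) g2 b x) := by
      intro i
      rw [hpdfun i, pd1_combo (shp_hasFDerivAt (pderiv i Q) hg b x).differentiableAt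
        (shp_hasFDerivAt (X i * Q) hg1 b x).differentiableAt,
        shp_pd (pderiv i Q) hg b x i, shp_pd (X i * Q) hg1 b x i]
      ring
    rw [lap1, Finset.sum_congr rfl fun i _ => hpd2 i]
    have e1 : ∑ i : Fin n, shp (pderiv i (pderiv i Q)) g b x = 0 := by
      have : ∑ i : Fin n, shp (pderiv i (pderiv i Q)) g b x
          = eval x (lapP Q) * g (rhoX x * b) := by
        rw [lapP, map_sum, Finset.sum_mul]
        rfl
      rw [this, hharm]
      simp
    have e2 : ∑ i : Fin n, shp (X i * pderiv i Q) g1 b x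
        = (d : ℝ) * eval x Q * g1 (rhoX x * b) := by
      have : ∀ i : Fin n, shp (X i * pderiv i Q) g1 b x
          = (x i * eval x (pderiv i Q)) * g1 (rhoX x * b) := by
        intro i; simp only [shp, eval_mul, eval_X]
      rw [Finset.sum_congr rfl fun i _ => this i, ← Finset.sum_mul, euler_eval hQ x]
    have e3 : ∑ i : Fin n, shp (pderiv i (X i * Q)) g1 b x
        = ((n : ℝ) + d) * eval x Q * g1 (rhoX x * b) := by
      have : ∀ i : Fin n, shp (pderiv i (X i * Q)) g1 b x
          = eval x Q * g1 (rhoX x * b) + (x i * eval x (pderiv i Q)) * g1 (rhoX x * b) := by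
        intro i
        simp only [shp, pderiv_mul, pderiv_X_self, eval_add, eval_mul, eval_X, one_mul]
        ring
      rw [Finset.sum_congr rfl fun i _ => this i, Finset.sum_add_distrib,
        Finset.sum_const, ← Finset.sum_mul, euler_eval hQ x, Finset.card_univ,
        Fintype.card_fin, nsmul_eq_mul]
      ring
    have e4 : ∑ i : Fin n, shp (X i * (X i * Q)) g2 b x
        = 2 * rhoX x * eval x Q * g2 (rhoX x * b) := by
      have : ∀ i : Fin n, shp (X i * (X i * Q)) g2 b x
          = (x i ^ 2) * (eval x Q * g2 (rhoX x * b)) := by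
        intro i
        simp only [shp, eval_mul, eval_X]
        ring
      rw [Finset.sum_congr rfl fun i _ => this i, ← Finset.sum_mul, hsum2]
      ring
    -- combine the four sums
    have expand : ∑ i : Fin n,
        ((shp (pderiv i (pderiv i Q)) g b x + b * shp (X i * pderiv i Q) g1 b x)
          + b * (shp (pderiv i (X i * Q)) g1 b x + b * shp (X i * (X i * Q)) g2 b x))
        = (∑ i : Fin n, shp (pderiv i (pderiv i Q)) g b x)
          + b * (∑ i : Fin n, shp (X i * pderiv i Q) g1 b x)
          + b * (∑ i : Fin n, shp (pderiv i (X i * Q)) g1 b x)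
          + b * b * (∑ i : Fin n, shp (X i * (X i * Q)) g2 b x) := by
      rw [Finset.mul_sum, Finset.mul_sum, Finset.mul_sum, ← Finset.sum_add_distrib,
        ← Finset.sum_add_distrib, ← Finset.sum_add_distrib]
      apply Finset.sum_congr rfl
      intro i _
      ring
    rw [expand, e1, e2, e3, e4]
    ring
  -- put everything together
  rw [heul2]
  rw [eul1_shp hQ hg b x]
  rw [eul1_shp hQ2 hg1 b x]
  rw [hlap]
  rw [hsum2]
  have s1 : shp (sqP n * Q) g1 b x = rhoX x * eval x Q * g1 (rhoX x * b) := by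
    simp only [shp, eval_mul, eval_sqP]
  have s2 : shp (sqP n * (sqP n * Q)) g2 b x
      = rhoX x * rhoX x * eval x Q * g2 (rhoX x * b) := by
    simp only [shp, eval_mul, eval_sqP]; ring
  have s0 : shp Q g b x = eval x Q * g (rhoX x * b) := rfl
  rw [s1, s2, s0]
  push_cast
  ring

end XiAux

/-- Ξ̂ = π(Ω_{o_p}) - π(Ω_{o_q}) - ((p-q)/(p+q))π(Ω_g) acts on
f = h₁h₂ρ_y^μΨ_{κ₊}(ρ_xρ_y) by the scalar
(κ₊-κ₋)(κ₊+κ₋-2) - ((p-q)/(p+q))·m(m+2); the scalar vanishes when m = 0. -/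
theorem Xi_eigenvalue (p q k l m μ : ℕ)
    (h₁ : MvPolynomial (Fin p) ℝ) (h₂ : MvPolynomial (Fin q) ℝ)
    (hh₁ : h₁.IsHomogeneous k) (hharm₁ : lapP h₁ = 0)
    (hh₂ : h₂.IsHomogeneous l) (hharm₂ : lapP h₂ = 0)
    (hμ : (μ : ℝ) = ((m : ℝ) + ((k : ℝ) + (p : ℝ) / 2) - ((l : ℝ) + (q : ℝ) / 2)) / 2) :
    let κp : ℝ := (k : ℝ) + (p : ℝ) / 2
    let κm : ℝ := (l : ℝ) + (q : ℝ) / 2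
    let F : (Fin p → ℝ) → (Fin q → ℝ) → ℝ :=
      fun x y => eval x h₁ * eval y h₂ * rhoY y ^ μ * Psi κp (rhoX x * rhoY y)
    let lam : ℝ := (κp - κm) * (κp + κm - 2) - (((p : ℝ) - q) / ((p : ℝ) + q)) * (m * (m + 2))
    (∀ (x : Fin p → ℝ) (y : Fin q → ℝ),
        OmG F x y = ((m : ℝ) * (m + 2) - ((p : ℝ) + q) ^ 2 / 4 + ((p : ℝ) + q)) * F x y) →
    ((∀ (x : Fin p → ℝ) (y : Fin q → ℝ),
        OmOp F x y - OmOq F x y - (((p : ℝ) - q) / ((p : ℝ) + q)) * OmG F x y = lam * F x y) ∧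
      (m = 0 → κp = κm → lam = 0)) := by
  intro κp κm F lam hOmG
  have hκp : κp = (k : ℝ) + (p : ℝ) / 2 := rfl
  have hκm : κm = (l : ℝ) + (q : ℝ) / 2 := rfl
  have hlam : lam = (κp - κm) * (κp + κm - 2)
      - (((p : ℝ) - q) / ((p : ℝ) + q)) * (m * (m + 2)) := rfl
  have hκp0 : (0 : ℝ) ≤ κp := by rw [hκp]; positivity
  -- the operator OmOp acts by k(k+p-2)
  have hOp : ∀ (x : Fin p → ℝ) (y : Fin q → ℝ),
      OmOp F x y = ((k : ℝ) * ((k : ℝ) + p - 2)) * F x y := by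
    intro x y
    have hFx : (fun x' => F x' y)
        = XiAux.shp (C (eval y h₂ * rhoY y ^ μ) * h₁) (Psi κp) (rhoY y) := by
      funext x'
      show eval x' h₁ * eval y h₂ * rhoY y ^ μ * Psi κp (rhoX x' * rhoY y) = _
      simp only [XiAux.shp, eval_mul, eval_C]
      ring
    have hhom : (C (eval y h₂ * rhoY y ^ μ) * h₁).IsHomogeneous k := hh₁.C_mul _
    have hharm : lapP (C (eval y h₂ * rhoY y ^ μ) * h₁) = 0 := by
      rw [XiAux.lapP_C_mul, hharm₁, mul_zero]
    have hbridge : OmOp F x y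
        = XiAux.eul1 (XiAux.eul1 (fun x' => F x' y)) x
          + ((p : ℝ) - 2) * XiAux.eul1 (fun x' => F x' y) x
          - (∑ i : Fin p, x i ^ 2) * XiAux.lap1 (fun x' => F x' y) x := rfl
    have hFval : XiAux.shp (C (eval y h₂ * rhoY y ^ μ) * h₁) (Psi κp) (rhoY y) x
        = F x y := (congrFun hFx x).symm
    rw [hbridge, hFx, XiAux.master hhom hharm (XiAux.hasDerivAt_Psi hκp0)
      (XiAux.hasDerivAt_Psi1 hκp0) (rhoY y) x, hFval]
  -- the operator OmOq acts by l(l+q-2)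
  have hOq : ∀ (x : Fin p → ℝ) (y : Fin q → ℝ),
      OmOq F x y = ((l : ℝ) * ((l : ℝ) + q - 2)) * F x y := by
    intro x y
    have hPsiC : ∀ t : ℝ, HasDerivAt (fun t : ℝ => Psi κp (rhoX x * t))
        (XiAux.Psi1 κp (rhoX x * t) * rhoX x) t := by
      intro t
      have h1 : HasDerivAt (fun t : ℝ => rhoX x * t) (rhoX x) t := by
        simpa using (hasDerivAt_id t).const_mul (rhoX x)
      exact (XiAux.hasDerivAt_Psi hκp0 (rhoX x * t)).comp t h1
    have hPsi1C : ∀ t : ℝ, HasDerivAt (fun t : ℝ => XiAux.Psi1 κp (rhoX x * t))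
        (XiAux.Psi2 κp (rhoX x * t) * rhoX x) t := by
      intro t
      have h1 : HasDerivAt (fun t : ℝ => rhoX x * t) (rhoX x) t := by
        simpa using (hasDerivAt_id t).const_mul (rhoX x)
      exact (XiAux.hasDerivAt_Psi1 hκp0 (rhoX x * t)).comp t h1
    have hG : ∀ t : ℝ, HasDerivAt (fun t : ℝ => t ^ μ * Psi κp (rhoX x * t))
        ((μ : ℝ) * t ^ (μ - 1) * Psi κp (rhoX x * t)
          + t ^ μ * (XiAux.Psi1 κp (rhoX x * t) * rhoX x)) t :=
      fun t => (hasDerivAt_pow μ t).mul (hPsiC t)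
    have hG1 : ∀ t : ℝ, HasDerivAt
        (fun t : ℝ => (μ : ℝ) * t ^ (μ - 1) * Psi κp (rhoX x * t)
          + t ^ μ * (XiAux.Psi1 κp (rhoX x * t) * rhoX x))
        (((μ : ℝ) * (((μ - 1 : ℕ) : ℝ) * t ^ (μ - 1 - 1)) * Psi κp (rhoX x * t)
            + (μ : ℝ) * t ^ (μ - 1) * (XiAux.Psi1 κp (rhoX x * t) * rhoX x))
          + ((μ : ℝ) * t ^ (μ - 1) * (XiAux.Psi1 κp (rhoX x * t) * rhoX x)
            + t ^ μ * (XiAux.Psi2 κp (rhoX x * t) * rhoX x * rhoX x))) t := by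
      intro t
      exact (((hasDerivAt_pow (μ - 1) t).const_mul (μ : ℝ)).mul (hPsiC t)).add
        ((hasDerivAt_pow μ t).mul ((hPsi1C t).mul_const (rhoX x)))
    have hFy : (F x)
        = XiAux.shp (C (eval x h₁) * h₂) (fun t : ℝ => t ^ μ * Psi κp (rhoX x * t)) 1 := by
      funext w
      show eval x h₁ * eval w h₂ * rhoY w ^ μ * Psi κp (rhoX x * rhoY w) = _
      simp only [XiAux.shp, eval_mul, eval_C, mul_one]
      have hr : rhoX w = rhoY w := rfl
      rw [hr]
      ring
    have hhom : (C (eval x h₁) * h₂).IsHomogeneous l := hh₂.C_mul _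
    have hharm : lapP (C (eval x h₁) * h₂) = 0 := by
      rw [XiAux.lapP_C_mul, hharm₂, mul_zero]
    have hbridge : OmOq F x y
        = XiAux.eul1 (XiAux.eul1 (F x)) y
          + ((q : ℝ) - 2) * XiAux.eul1 (F x) y
          - (∑ j : Fin q, y j ^ 2) * XiAux.lap1 (F x) y := rfl
    have hFval : XiAux.shp (C (eval x h₁) * h₂)
        (fun t : ℝ => t ^ μ * Psi κp (rhoX x * t)) 1 y = F x y := (congrFun hFy y).symm
    rw [hbridge, hFy, XiAux.master hhom hharm hG hG1 1 y, hFval]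
  refine ⟨fun x y => ?_, fun hm hκ => ?_⟩
  · rw [hOp x y, hOq x y, hOmG x y, hlam, hκp, hκm]
    by_cases hpq : (p : ℝ) + (q : ℝ) = 0
    · have hp0 : (p : ℝ) = 0 := by
        nlinarith [Nat.cast_nonneg (α := ℝ) p, Nat.cast_nonneg (α := ℝ) q]
      have hq0 : (q : ℝ) = 0 := by
        nlinarith [Nat.cast_nonneg (α := ℝ) p, Nat.cast_nonneg (α := ℝ) q]
      rw [hp0, hq0]
      norm_num
      ring
    · field_simp
      ring
  · rw [hlam, hκ, hm]
    norm_num
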